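/- arXiv:math/0405005 — 3 statements merged into one kernel-verified Lean document; each statement's English description precedes it below -/
import Mathlib

section
/- Let H be a Hopf algebra with bijective antipode S, and M a left H-module and left H-comodule satisfying the anti-Yetter-Drinfeld condition Δ_M(h·m) = h⁽¹⁾m⁽⁻¹⁾S⁻¹(h⁽³⁾) ⊗ h⁽²⁾m⁽⁰⁾. Then the map M → M, m ↦ m⁽⁻¹⁾·m⁽⁰⁾ (action composed with coaction) is a homomorphism of left H-modules. -/
open TensorProduct LinearMap Coalgebra

noncomputable section

variable (k : Type) [Field k] (H : Type) [Ring H] [HopfAlgebra k H]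
variable (M : Type) [AddCommGroup M] [Module k M]

/-- The right-hand side `h⁽¹⁾m⁽⁻¹⁾S⁻¹(h⁽³⁾) ⊗ h⁽²⁾m⁽⁰⁾` of the left-left
anti-Yetter-Drinfeld condition, as a linear map `H ⊗ M → H ⊗ M`, where `Sinv` plays
the role of the inverse of the antipode. -/
def aydRHSll (Sinv : H →ₗ[k] H) (act : H ⊗[k] M →ₗ[k] M)
    (coact : M →ₗ[k] H ⊗[k] M) : H ⊗[k] M →ₗ[k] H ⊗[k] M :=
  map (mul' k H ∘ₗ map (mul' k H) Sinv) act
    ∘ₗ (TensorProduct.assoc k (H ⊗[k] H) H (H ⊗[k] M)).symm.toLinearMap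
    ∘ₗ map LinearMap.id
        ((TensorProduct.leftComm k H H M).toLinearMap
          ∘ₗ (TensorProduct.assoc k H H M).toLinearMap)
    ∘ₗ (tensorTensorTensorComm k H (H ⊗[k] H) H M).toLinearMap
    ∘ₗ map (map LinearMap.id comul ∘ₗ comul) coact

/-- The left-left anti-Yetter-Drinfeld condition:
`Δ_M(h·m) = h⁽¹⁾m⁽⁻¹⁾S⁻¹(h⁽³⁾) ⊗ h⁽²⁾m⁽⁰⁾`. -/
def IsAYDll (Sinv : H →ₗ[k] H) (act : H ⊗[k] M →ₗ[k] M)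
    (coact : M →ₗ[k] H ⊗[k] M) : Prop :=
  coact ∘ₗ act = aydRHSll k H M Sinv act coact

section Helpers

variable {𝕜 : Type} [Field 𝕜] {A : Type} [Ring A] [HopfAlgebra 𝕜 A]

local notation "S" => HopfAlgebra.antipode (R := 𝕜) (A := A)
local notation "ε" => Coalgebra.counit (R := 𝕜) (A := A)

lemma my_sum_smul_counit {a : A} (r : Repr 𝕜 a (A × A)) :
    ∑ i ∈ r.index, ε (r.right i) • r.left i = a := by
  have h := congrArg (TensorProduct.rid 𝕜 A) (sum_tmul_counit_eq r)
  simp only [map_sum, TensorProduct.rid_tmul, one_smul] at h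
  exact h

lemma my_sum_counit_smul {a : A} (r : Repr 𝕜 a (A × A)) :
    ∑ i ∈ r.index, ε (r.left i) • r.right i = a := by
  have h := congrArg (TensorProduct.lid 𝕜 A) (sum_counit_tmul_eq r)
  simp only [map_sum, TensorProduct.lid_tmul, one_smul] at h
  exact h

lemma my_antipode_one : S (1 : A) = 1 := by
  have h := HopfAlgebra.mul_antipode_rTensor_comul_apply (R := 𝕜) (A := A) 1
  simpa [Algebra.TensorProduct.one_def] using h

/-- A representation of `comul (x*y)` from representations of `x` and `y`. -/
def mulRepr {x y : A} (rx : Repr 𝕜 x (A × A)) (ry : Repr 𝕜 y (A × A)) : Repr 𝕜 (x * y) ((A × A) × (A × A)) where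
  index := rx.index ×ˢ ry.index
  left := fun p => rx.left p.1 * ry.left p.2
  right := fun p => rx.right p.1 * ry.right p.2
  eq := by
    rw [Bialgebra.comul_mul, ← rx.eq, ← ry.eq, Finset.sum_mul_sum]
    rw [Finset.sum_product]
    simp [Algebra.TensorProduct.tmul_mul_tmul]

lemma my_claim1 {x y : A} (rx : Repr 𝕜 x (A × A)) (ry : Repr 𝕜 y (A × A)) :
    ∑ p ∈ rx.index, ∑ q ∈ ry.index,
      S (rx.left p * ry.left q) * (rx.right p * ry.right q)
      = (ε x * ε y) • (1 : A) := by
  have h := HopfAlgebra.sum_antipode_mul_eq_smul (R := 𝕜) (mulRepr rx ry)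
  simp only [mulRepr, Finset.sum_product, Bialgebra.counit_mul] at h
  exact h

/-- Triple multiplication after applying three linear maps, as a linear map on `A ⊗ (A ⊗ A)`. -/
def tmap3 (g1 g2 g3 : A →ₗ[𝕜] A) : A ⊗[𝕜] (A ⊗[𝕜] A) →ₗ[𝕜] A :=
  mul' 𝕜 A ∘ₗ map g1 (mul' 𝕜 A ∘ₗ map g2 g3)

@[simp] lemma tmap3_tmul (g1 g2 g3 : A →ₗ[𝕜] A) (x y z : A) :
    tmap3 g1 g2 g3 (x ⊗ₜ[𝕜] (y ⊗ₜ[𝕜] z)) = g1 x * (g2 y * g3 z) := by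
  simp [tmap3]

/-- Regrouping a twofold comultiplication inside a trilinear expression. -/
lemma my_swap {a : A} (r : Repr 𝕜 a (A × A)) (r₁ : (i : r.ι) → Repr 𝕜 (r.left i) (A × A))
    (r₂ : (i : r.ι) → Repr 𝕜 (r.right i) (A × A)) (g1 g2 g3 : A →ₗ[𝕜] A) :
    ∑ i ∈ r.index, ∑ p ∈ (r₁ i).index,
      g1 ((r₁ i).left p) * (g2 ((r₁ i).right p) * g3 (r.right i))
    = ∑ i ∈ r.index, ∑ p ∈ (r₂ i).index,
      g1 (r.left i) * (g2 ((r₂ i).left p) * g3 ((r₂ i).right p)) := by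
  have h2 := congrArg (tmap3 g1 g2 g3) (sum_tmul_tmul_eq r r₁ r₂)
  simpa [map_sum] using h2

lemma my_collapse1 {x : A} (r : Repr 𝕜 x (A × A)) (c : A) :
    ∑ q ∈ r.index, r.left q * (S (r.right q) * c) = ε x • c := by
  have h := HopfAlgebra.sum_mul_antipode_eq_smul (R := 𝕜) r
  calc ∑ q ∈ r.index, r.left q * (S (r.right q) * c)
      = (∑ q ∈ r.index, r.left q * S (r.right q)) * c := by
        rw [Finset.sum_mul]; simp_rw [mul_assoc]
    _ = ε x • c := by rw [h, smul_mul_assoc, one_mul]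

lemma my_claim1' {x y : A} (rx : Repr 𝕜 x (A × A)) (ry : Repr 𝕜 y (A × A)) (c : A) :
    ∑ p ∈ rx.index, ∑ q ∈ ry.index,
      S (rx.left p * ry.left q) * (rx.right p * (ry.right q * c))
      = (ε x * ε y) • c := by
  have h := my_claim1 rx ry
  calc ∑ p ∈ rx.index, ∑ q ∈ ry.index,
        S (rx.left p * ry.left q) * (rx.right p * (ry.right q * c))
      = (∑ p ∈ rx.index, ∑ q ∈ ry.index,
          S (rx.left p * ry.left q) * (rx.right p * ry.right q)) * c := by
        rw [Finset.sum_mul]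
        refine Finset.sum_congr rfl fun p _ => ?_
        rw [Finset.sum_mul]
        refine Finset.sum_congr rfl fun q _ => ?_
        simp_rw [mul_assoc]
    _ = (ε x * ε y) • c := by rw [h, smul_mul_assoc, one_mul]

lemma my_antipode_mul (a b : A) : S (a * b) = S b * S a := by
  have ra := ℛ 𝕜 a
  have rb := ℛ 𝕜 b
  have ra₁ : ∀ i, Repr 𝕜 (ra.left i) (A × A) := fun i => ℛ 𝕜 _
  have ra₂ : ∀ i, Repr 𝕜 (ra.right i) (A × A) := fun i => ℛ 𝕜 _
  have rb₁ : ∀ j, Repr 𝕜 (rb.left j) (A × A) := fun j => ℛ 𝕜 _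
  have rb₂ : ∀ j, Repr 𝕜 (rb.right j) (A × A) := fun j => ℛ 𝕜 _
  calc S (a * b)
      = ∑ i ∈ ra.index, ∑ j ∈ rb.index,
          ε (ra.right i) • ε (rb.right j) • S (ra.left i * rb.left j) := by
        conv_lhs => rw [← my_sum_smul_counit ra, ← my_sum_smul_counit rb]
        rw [Finset.sum_mul_sum, map_sum]
        refine Finset.sum_congr rfl fun i _ => ?_
        rw [map_sum]
        refine Finset.sum_congr rfl fun j _ => ?_
        rw [smul_mul_smul_comm, map_smul, mul_smul]
    _ = ∑ i ∈ ra.index, ∑ p ∈ (ra₂ i).index, ∑ j ∈ rb.index, ∑ q ∈ (rb₂ j).index,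
          S (ra.left i * rb.left j) *
            ((ra₂ i).left p * ((rb₂ j).left q *
              (S ((rb₂ j).right q) * S ((ra₂ i).right p)))) := by
        refine Finset.sum_congr rfl fun i _ => ?_
        symm
        calc ∑ p ∈ (ra₂ i).index, ∑ j ∈ rb.index, ∑ q ∈ (rb₂ j).index,
              S (ra.left i * rb.left j) *
                ((ra₂ i).left p * ((rb₂ j).left q *
                  (S ((rb₂ j).right q) * S ((ra₂ i).right p))))
            = ∑ p ∈ (ra₂ i).index, ∑ j ∈ rb.index,
                ε (rb.right j) • (S (ra.left i * rb.left j) *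
                  ((ra₂ i).left p * S ((ra₂ i).right p))) := by
              refine Finset.sum_congr rfl fun p _ => Finset.sum_congr rfl fun j _ => ?_
              rw [← Finset.mul_sum, ← Finset.mul_sum, my_collapse1 (rb₂ j),
                mul_smul_comm, mul_smul_comm]
          _ = ∑ j ∈ rb.index, ∑ p ∈ (ra₂ i).index,
                ε (rb.right j) • (S (ra.left i * rb.left j) *
                  ((ra₂ i).left p * S ((ra₂ i).right p))) := Finset.sum_comm
          _ = ∑ j ∈ rb.index, ε (rb.right j) • ε (ra.right i) • S (ra.left i * rb.left j) := by
              refine Finset.sum_congr rfl fun j _ => ?_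
              rw [← Finset.smul_sum, ← Finset.mul_sum,
                HopfAlgebra.sum_mul_antipode_eq_smul (R := 𝕜) (ra₂ i), mul_smul_comm, mul_one]
          _ = ∑ j ∈ rb.index, ε (ra.right i) • ε (rb.right j) • S (ra.left i * rb.left j) := by
              refine Finset.sum_congr rfl fun j _ => ?_
              rw [smul_comm]
    _ = ∑ i ∈ ra.index, ∑ p ∈ (ra₂ i).index, ∑ j ∈ rb.index, ∑ q ∈ (rb₁ j).index,
          S (ra.left i * (rb₁ j).left q) *
            ((ra₂ i).left p * ((rb₁ j).right q *
              (S (rb.right j) * S ((ra₂ i).right p)))) := by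
        refine Finset.sum_congr rfl fun i _ => Finset.sum_congr rfl fun p _ => ?_
        have h := my_swap rb rb₁ rb₂
          ((HopfAlgebra.antipode (R := 𝕜)) ∘ₗ mulLeft 𝕜 (ra.left i))
          (mulLeft 𝕜 ((ra₂ i).left p))
          (mulRight 𝕜 (S ((ra₂ i).right p)) ∘ₗ (HopfAlgebra.antipode (R := 𝕜)))
        simp only [comp_apply, mulLeft_apply, mulRight_apply] at h
        simp only [mul_assoc] at h ⊢
        exact h.symm
    _ = ∑ j ∈ rb.index, ∑ q ∈ (rb₁ j).index, ∑ i ∈ ra.index, ∑ p ∈ (ra₂ i).index,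
          S (ra.left i * (rb₁ j).left q) *
            ((ra₂ i).left p * ((rb₁ j).right q *
              (S (rb.right j) * S ((ra₂ i).right p)))) := by
        refine Eq.trans (Finset.sum_congr rfl fun i _ => Finset.sum_comm) ?_
        refine Eq.trans Finset.sum_comm ?_
        refine Finset.sum_congr rfl fun j _ => ?_
        refine Eq.trans (Finset.sum_congr rfl fun i _ => Finset.sum_comm) ?_
        exact Finset.sum_comm
    _ = ∑ j ∈ rb.index, ∑ q ∈ (rb₁ j).index, ∑ i ∈ ra.index, ∑ p ∈ (ra₁ i).index,
          S ((ra₁ i).left p * (rb₁ j).left q) *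
            ((ra₁ i).right p * ((rb₁ j).right q *
              (S (rb.right j) * S (ra.right i)))) := by
        refine Finset.sum_congr rfl fun j _ => Finset.sum_congr rfl fun q _ => ?_
        have h := my_swap ra ra₁ ra₂
          ((HopfAlgebra.antipode (R := 𝕜)) ∘ₗ mulRight 𝕜 ((rb₁ j).left q))
          LinearMap.id
          (mulLeft 𝕜 ((rb₁ j).right q) ∘ₗ mulLeft 𝕜 (S (rb.right j)) ∘ₗ
            (HopfAlgebra.antipode (R := 𝕜)))
        simp only [comp_apply, mulLeft_apply, mulRight_apply, id_apply] at h
        exact h.symm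
    _ = ∑ i ∈ ra.index, ∑ j ∈ rb.index, ∑ p ∈ (ra₁ i).index, ∑ q ∈ (rb₁ j).index,
          S ((ra₁ i).left p * (rb₁ j).left q) *
            ((ra₁ i).right p * ((rb₁ j).right q *
              (S (rb.right j) * S (ra.right i)))) := by
        refine Eq.trans (Finset.sum_congr rfl fun j _ => Finset.sum_comm) ?_
        refine Eq.trans (Finset.sum_congr rfl fun j _ =>
          Finset.sum_congr rfl fun i _ => Finset.sum_comm) ?_
        exact Finset.sum_comm
    _ = ∑ i ∈ ra.index, ∑ j ∈ rb.index,
          (ε (ra.left i) * ε (rb.left j)) • (S (rb.right j) * S (ra.right i)) := by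
        refine Finset.sum_congr rfl fun i _ => Finset.sum_congr rfl fun j _ => ?_
        exact my_claim1' (ra₁ i) (rb₁ j) _
    _ = S b * S a := by
        have hb : ∑ j ∈ rb.index, ε (rb.left j) • S (rb.right j) = S b := by
          have := congrArg (HopfAlgebra.antipode (R := 𝕜)) (my_sum_counit_smul rb)
          simpa [map_sum] using this
        have ha : ∑ i ∈ ra.index, ε (ra.left i) • S (ra.right i) = S a := by
          have := congrArg (HopfAlgebra.antipode (R := 𝕜)) (my_sum_counit_smul ra)
          simpa [map_sum] using this
        calc ∑ i ∈ ra.index, ∑ j ∈ rb.index,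
              (ε (ra.left i) * ε (rb.left j)) • (S (rb.right j) * S (ra.right i))
            = ∑ i ∈ ra.index, ∑ j ∈ rb.index,
                (ε (rb.left j) • S (rb.right j)) * (ε (ra.left i) • S (ra.right i)) := by
              refine Finset.sum_congr rfl fun i _ => Finset.sum_congr rfl fun j _ => ?_
              rw [smul_mul_smul_comm, mul_comm (ε (rb.left j))]
          _ = ∑ i ∈ ra.index,
                (∑ j ∈ rb.index, ε (rb.left j) • S (rb.right j)) *
                  (ε (ra.left i) • S (ra.right i)) := by
              refine Finset.sum_congr rfl fun i _ => ?_
              rw [Finset.sum_mul]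
          _ = S b * S a := by
              rw [hb, ← Finset.mul_sum, ha]

lemma my_key (Sinv : A →ₗ[𝕜] A)
    (hS1 : Sinv ∘ₗ HopfAlgebra.antipode (R := 𝕜) = LinearMap.id)
    (hS2 : HopfAlgebra.antipode (R := 𝕜) ∘ₗ Sinv = LinearMap.id)
    {a : A} (r : Repr 𝕜 a (A × A)) :
    ∑ i ∈ r.index, Sinv (r.right i) * r.left i = ε a • 1 := by
  have hSS : ∀ x : A, Sinv (S x) = x := fun x => by
    have := LinearMap.congr_fun hS1 x
    simpa using this
  have hSS2 : ∀ x : A, S (Sinv x) = x := fun x => by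
    have := LinearMap.congr_fun hS2 x
    simpa using this
  have hinj : Function.Injective (HopfAlgebra.antipode (R := 𝕜) (A := A)) := by
    intro x y hxy
    rw [← hSS x, ← hSS y, hxy]
  apply hinj
  rw [map_sum]
  have he : ∀ i ∈ r.index, S (Sinv (r.right i) * r.left i) = S (r.left i) * r.right i := by
    intro i _
    rw [my_antipode_mul, hSS2]
  rw [Finset.sum_congr rfl he, HopfAlgebra.sum_antipode_mul_eq_smul (R := 𝕜) r,
    map_smul, my_antipode_one]


end Helpers

theorem statement0
    (Sinv : H →ₗ[k] H)
    (hS1 : Sinv ∘ₗ HopfAlgebra.antipode (R := k) = LinearMap.id)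
    (hS2 : HopfAlgebra.antipode (R := k) ∘ₗ Sinv = LinearMap.id)
    (act : H ⊗[k] M →ₗ[k] M)
    (hact_one : ∀ m : M, act ((1 : H) ⊗ₜ[k] m) = m)
    (hact_mul : ∀ (g h : H) (m : M),
      act ((g * h) ⊗ₜ[k] m) = act (g ⊗ₜ[k] act (h ⊗ₜ[k] m)))
    (coact : M →ₗ[k] H ⊗[k] M)
    (hcoassoc : map LinearMap.id coact ∘ₗ coact =
      (TensorProduct.assoc k H H M).toLinearMap ∘ₗ map comul LinearMap.id ∘ₗ coact)
    (hcounit : (TensorProduct.lid k M).toLinearMap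
        ∘ₗ map (counit (R := k) (A := H)) LinearMap.id ∘ₗ coact = LinearMap.id)
    (hayd : IsAYDll k H M Sinv act coact) :
    -- `m ↦ m⁽⁻¹⁾·m⁽⁰⁾` is a homomorphism of left `H`-modules
    (act ∘ₗ coact) ∘ₗ act = act ∘ₗ map LinearMap.id (act ∘ₗ coact) := by
  have hayd' : coact ∘ₗ act = aydRHSll k H M Sinv act coact := hayd

  rw [LinearMap.comp_assoc, hayd']
  refine TensorProduct.ext' fun x m => ?_
  obtain ⟨s, hs⟩ := TensorProduct.exists_finset (R := k) (coact m)
  have rh := ℛ k x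
  have rh₂ : ∀ i, Repr k (rh.right i) (H × H) := fun i => ℛ k _
  have hE : ∀ i, comul (R := k) (rh.right i)
      = ∑ p ∈ (rh₂ i).index, (rh₂ i).left p ⊗ₜ[k] (rh₂ i).right p :=
    fun i => ((rh₂ i).eq).symm
  calc (act ∘ₗ aydRHSll k H M Sinv act coact) (x ⊗ₜ[k] m)
      = ∑ t ∈ s, ∑ i ∈ rh.index, ∑ p ∈ (rh₂ i).index,
          act ((rh.left i * t.1 * Sinv ((rh₂ i).right p)) ⊗ₜ[k]
            act ((rh₂ i).left p ⊗ₜ[k] t.2)) := by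
        rw [comp_apply, aydRHSll]
        simp only [comp_apply, map_tmul, id_coe, id_eq]
        rw [← rh.eq, hs]
        simp only [map_sum, sum_tmul, tmul_sum, map_tmul, hE, id_coe, id_eq]
        simp only [map_sum, sum_tmul, tmul_sum, LinearEquiv.coe_coe,
          tensorTensorTensorComm_tmul, TensorProduct.assoc_tmul,
          TensorProduct.leftComm_tmul, TensorProduct.assoc_symm_tmul,
          map_tmul, comp_apply, mul'_apply, id_coe, id_eq, map_sum]
    _ = ∑ t ∈ s, ∑ i ∈ rh.index, ∑ p ∈ (rh₂ i).index,
          act (rh.left i ⊗ₜ[k] act (t.1 ⊗ₜ[k]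
            act ((Sinv ((rh₂ i).right p) * (rh₂ i).left p) ⊗ₜ[k] t.2))) := by
        refine Finset.sum_congr rfl fun t _ => Finset.sum_congr rfl fun i _ =>
          Finset.sum_congr rfl fun p _ => ?_
        rw [hact_mul (rh.left i * t.1) (Sinv ((rh₂ i).right p)),
          hact_mul (rh.left i) t.1,
          ← hact_mul (Sinv ((rh₂ i).right p)) ((rh₂ i).left p)]
    _ = ∑ t ∈ s, ∑ i ∈ rh.index,
          Coalgebra.counit (R := k) (rh.right i) • act (rh.left i ⊗ₜ[k] act (t.1 ⊗ₜ[k] t.2)) := by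
        refine Finset.sum_congr rfl fun t _ => Finset.sum_congr rfl fun i _ => ?_
        have hk := congrArg (act ∘ₗ TensorProduct.mk k H M (rh.left i) ∘ₗ act ∘ₗ
          TensorProduct.mk k H M t.1 ∘ₗ act ∘ₗ (TensorProduct.mk k H M).flip t.2)
          (my_key Sinv hS1 hS2 (rh₂ i))
        simp only [map_sum, map_smul, comp_apply, TensorProduct.mk_apply,
          LinearMap.flip_apply, TensorProduct.smul_tmul', hact_one] at hk
        rw [hk]
    _ = ∑ t ∈ s, act (x ⊗ₜ[k] act (t.1 ⊗ₜ[k] t.2)) := by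
        refine Finset.sum_congr rfl fun t _ => ?_
        have hk := congrArg (act ∘ₗ (TensorProduct.mk k H M).flip (act (t.1 ⊗ₜ[k] t.2)))
          (my_sum_smul_counit rh)
        simp only [map_sum, map_smul, comp_apply, TensorProduct.mk_apply,
          LinearMap.flip_apply, TensorProduct.smul_tmul'] at hk
        exact hk
    _ = (act ∘ₗ map LinearMap.id (act ∘ₗ coact)) (x ⊗ₜ[k] m) := by
        have hk := congrArg (act ∘ₗ TensorProduct.mk k H M x ∘ₗ act) hs.symm
        simp only [map_sum, comp_apply, TensorProduct.mk_apply] at hk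
        rw [hk]
        simp [map_tmul]
end
end

section
/- Let H be a Hopf algebra with bijective antipode S, and M a left H-module and left H-comodule satisfying the anti-Yetter-Drinfeld condition. Then the map M → M, m ↦ m⁽⁻¹⁾·m⁽⁰⁾ is a homomorphism of left H-comodules. -/
open TensorProduct LinearMap Coalgebra

noncomputable section

variable (k : Type) [Field k] (H : Type) [Ring H] [HopfAlgebra k H]
variable (M : Type) [AddCommGroup M] [Module k M]

namespace AYDAux
open HopfAlgebra




section Conv
variable {C : Type} [AddCommGroup C] [Module k C] [Coalgebra k C]

/-- convolution product on `C →ₗ[k] H` -/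
def conv (f g : C →ₗ[k] H) : C →ₗ[k] H :=
  mul' k H ∘ₗ map f g ∘ₗ comul

/-- convolution unit -/
def convUnit : C →ₗ[k] H := Algebra.linearMap k H ∘ₗ counit

lemma conv_apply (f g : C →ₗ[k] H) (c : C) (r : Coalgebra.Repr k c (C × C)) :
    conv k H f g c = ∑ i ∈ r.index, f (r.left i) * g (r.right i) := by
  simp [conv, ← r.eq, map_sum]

lemma conv_assoc (f g h : C →ₗ[k] H) :
    conv k H (conv k H f g) h = conv k H f (conv k H g h) := by
  apply LinearMap.ext; intro c
  set r := ℛ k c with hr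
  set a₁ : (i : C × C) → Coalgebra.Repr k (r.left i) (C × C) := fun i => ℛ k (r.left i) with ha₁
  set a₂ : (i : C × C) → Coalgebra.Repr k (r.right i) (C × C) := fun i => ℛ k (r.right i) with ha₂
  have key := Coalgebra.sum_map_tmul_tmul_eq (R := k) f g h c (repr := r) (a₁ := a₁) (a₂ := a₂)
  have key2 := congrArg (mul' k H ∘ₗ lTensor H (mul' k H)) key
  simp only [map_sum, comp_apply, lTensor_tmul, mul'_apply] at key2
  rw [conv_apply k H _ h c r, conv_apply k H f _ c r]
  calc ∑ i ∈ r.index, conv k H f g (r.left i) * h (r.right i)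
      = ∑ i ∈ r.index, ∑ j ∈ (a₁ i).index,
          f ((a₁ i).left j) * (g ((a₁ i).right j) * h (r.right i)) := by
        refine Finset.sum_congr rfl fun i _ => ?_
        rw [conv_apply k H f g _ (a₁ i), Finset.sum_mul]
        exact Finset.sum_congr rfl fun j _ => mul_assoc _ _ _
    _ = ∑ i ∈ r.index, ∑ j ∈ (a₂ i).index,
          f (r.left i) * (g ((a₂ i).left j) * h ((a₂ i).right j)) := key2.symm
    _ = ∑ i ∈ r.index, f (r.left i) * conv k H g h (r.right i) := by
        refine Finset.sum_congr rfl fun i _ => ?_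
        rw [conv_apply k H g h _ (a₂ i), Finset.mul_sum]

lemma convUnit_conv (f : C →ₗ[k] H) : conv k H (convUnit k H) f = f := by
  apply LinearMap.ext; intro c
  set r := ℛ k c with hr
  have key := Coalgebra.sum_counit_tmul_map_eq (R := k) f c (repr := r)
  have key2 := congrArg (TensorProduct.lid k H) key
  simp only [map_sum, lid_tmul, one_smul] at key2
  rw [conv_apply k H _ f c r, ← key2]
  refine Finset.sum_congr rfl fun i _ => ?_
  simp [convUnit, Algebra.smul_def]

lemma conv_convUnit (f : C →ₗ[k] H) : conv k H f (convUnit k H) = f := by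
  apply LinearMap.ext; intro c
  set r := ℛ k c with hr
  have key := Coalgebra.sum_map_tmul_counit_eq (R := k) f c (repr := r)
  have key2 := congrArg (TensorProduct.rid k H) key
  simp only [map_sum, rid_tmul, one_smul] at key2
  rw [conv_apply k H f _ c r, ← key2]
  refine Finset.sum_congr rfl fun i _ => ?_
  simp [convUnit, Algebra.smul_def, ← Algebra.commutes]

end Conv

local notation "S" => (antipode (R := k) (A := H))
local notation "μH" => mul' k H

lemma antipode_one' : S (1 : H) = 1 := by
  have := mul_antipode_rTensor_comul_apply (R := k) (A := H) 1
  simpa [Algebra.TensorProduct.one_def] using this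

lemma conv1_aux (X Y : H ⊗[k] H) :
    μH (map (S ∘ₗ μH) μH (tensorTensorTensorComm k H H H H (X ⊗ₜ[k] Y)))
      = μH (rTensor H S (X * Y)) := by
  induction X with
  | zero => simp
  | add u v hu hv => simp only [add_tmul, map_add, add_mul] at *; rw [hu, hv]
  | tmul x₁ x₂ =>
    induction Y with
    | zero => simp
    | add u v hu hv => simp only [tmul_add, map_add, mul_add] at *; rw [hu, hv]
    | tmul y₁ y₂ => simp [Algebra.TensorProduct.tmul_mul_tmul]

lemma conv_rho_mm :
    conv k H (S ∘ₗ μH) μH = convUnit k H := by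
  apply TensorProduct.ext'; intro a b
  have h1 : conv k H (S ∘ₗ μH) μH (a ⊗ₜ[k] b)
      = μH (map (S ∘ₗ μH) μH (tensorTensorTensorComm k H H H H (comul a ⊗ₜ[k] comul b))) := rfl
  rw [h1, conv1_aux, ← Bialgebra.comul_mul, mul_antipode_rTensor_comul_apply,
    Bialgebra.counit_mul]
  simp [convUnit, TensorProduct.instCoalgebraStruct]
  exact Algebra.commutes _ _

lemma conv_mm_nu :
    conv k H μH (μH ∘ₗ map S S ∘ₗ (TensorProduct.comm k H H).toLinearMap)
      = convUnit k H := by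
  apply TensorProduct.ext'; intro a b
  set ra := ℛ k a with hra
  set rb := ℛ k b with hrb
  have h1 : conv k H μH (μH ∘ₗ map S S ∘ₗ (TensorProduct.comm k H H).toLinearMap) (a ⊗ₜ[k] b)
      = μH ((map μH (μH ∘ₗ map S S ∘ₗ (TensorProduct.comm k H H).toLinearMap))
          (tensorTensorTensorComm k H H H H (comul a ⊗ₜ[k] comul b))) := rfl
  rw [h1, ← ra.eq, ← rb.eq]
  rw [sum_tmul]
  simp only [tmul_sum, map_sum, Finset.sum_apply, tensorTensorTensorComm_tmul, map_tmul,
    mul'_apply, comp_apply, LinearEquiv.coe_coe, TensorProduct.comm_tmul]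
  calc ∑ i ∈ ra.index, ∑ j ∈ rb.index,
        (ra.left i * rb.left j) * (S (rb.right j) * S (ra.right i))
      = ∑ i ∈ ra.index, ra.left i * ((∑ j ∈ rb.index, rb.left j * S (rb.right j)) * S (ra.right i)) := by
        refine Finset.sum_congr rfl fun i _ => ?_
        rw [Finset.sum_mul, Finset.mul_sum]
        refine Finset.sum_congr rfl fun j _ => ?_
        rw [mul_assoc, ← mul_assoc (rb.left j)]
    _ = ∑ i ∈ ra.index, ra.left i * (algebraMap k H (counit b) * S (ra.right i)) := by
        rw [sum_mul_antipode_eq_algebraMap_counit rb]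
    _ = (counit b : k) • ∑ i ∈ ra.index, ra.left i * S (ra.right i) := by
        rw [Finset.smul_sum]
        refine Finset.sum_congr rfl fun i _ => ?_
        rw [← Algebra.smul_def, mul_smul_comm]
    _ = (counit b : k) • algebraMap k H (counit a) := by rw [sum_mul_antipode_eq_algebraMap_counit ra]
    _ = algebraMap k H (counit (R := k) a * counit (R := k) b) := by
        rw [Algebra.smul_def, ← map_mul, mul_comm]
  simp [convUnit, TensorProduct.instCoalgebraStruct]
  exact Algebra.commutes _ _

lemma antipode_mul'' (a b : H) : S (a * b) = S b * S a := by
  have hρν : ((S ∘ₗ μH : H ⊗[k] H →ₗ[k] H))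
      = μH ∘ₗ map S S ∘ₗ (TensorProduct.comm k H H).toLinearMap := by
    calc (S ∘ₗ μH : H ⊗[k] H →ₗ[k] H)
        = conv k H (S ∘ₗ μH) (convUnit k H) := (conv_convUnit k H _).symm
      _ = conv k H (S ∘ₗ μH) (conv k H μH
            (μH ∘ₗ map S S ∘ₗ (TensorProduct.comm k H H).toLinearMap)) := by
          rw [conv_mm_nu]
      _ = conv k H (conv k H (S ∘ₗ μH) μH)
            (μH ∘ₗ map S S ∘ₗ (TensorProduct.comm k H H).toLinearMap) := by
          rw [conv_assoc]
      _ = conv k H (convUnit k H)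
            (μH ∘ₗ map S S ∘ₗ (TensorProduct.comm k H H).toLinearMap) := by
          rw [conv_rho_mm]
      _ = μH ∘ₗ map S S ∘ₗ (TensorProduct.comm k H H).toLinearMap := convUnit_conv k H _
  have := congrArg (fun f : H ⊗[k] H →ₗ[k] H => f (a ⊗ₜ[k] b)) hρν
  simpa using this

lemma sum_mul_sinv_eq (Sinv : H →ₗ[k] H)
    (hS1 : Sinv ∘ₗ antipode (R := k) = LinearMap.id)
    (hS2 : antipode (R := k) (A := H) ∘ₗ Sinv = LinearMap.id)
    {a : H} (r : Coalgebra.Repr k a (H × H)) :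
    ∑ i ∈ r.index, r.right i * Sinv (r.left i) = algebraMap k H (counit a) := by
  have hinj : Function.Injective (S : H →ₗ[k] H) :=
    Function.LeftInverse.injective (g := Sinv) (fun x => LinearMap.congr_fun hS1 x)
  apply hinj
  rw [map_sum]
  calc ∑ i ∈ r.index, S (r.right i * Sinv (r.left i))
      = ∑ i ∈ r.index, r.left i * S (r.right i) := by
        refine Finset.sum_congr rfl fun i _ => ?_
        have h2x : antipode (R := k) (Sinv (r.left i)) = r.left i :=
          LinearMap.congr_fun hS2 (r.left i)
        rw [antipode_mul'', h2x]
    _ = algebraMap k H (counit a) := sum_mul_antipode_eq_algebraMap_counit r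
    _ = S (algebraMap k H (counit a)) := by
        rw [Algebra.algebraMap_eq_smul_one, map_smul, antipode_one']



/-- The inner rearrangement+multiplication part of `aydRHSll`. -/
def bigmapsD (Sinv : H →ₗ[k] H) (act : H ⊗[k] M →ₗ[k] M) :
    (H ⊗[k] (H ⊗[k] H)) ⊗[k] (H ⊗[k] M) →ₗ[k] H ⊗[k] M :=
  map (mul' k H ∘ₗ map (mul' k H) Sinv) act
    ∘ₗ (TensorProduct.assoc k (H ⊗[k] H) H (H ⊗[k] M)).symm.toLinearMap
    ∘ₗ map LinearMap.id
        ((TensorProduct.leftComm k H H M).toLinearMap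
          ∘ₗ (TensorProduct.assoc k H H M).toLinearMap)
    ∘ₗ (tensorTensorTensorComm k H (H ⊗[k] H) H M).toLinearMap

def PhiD (Sinv : H →ₗ[k] H) (act : H ⊗[k] M →ₗ[k] M) :
    H ⊗[k] (H ⊗[k] M) →ₗ[k] H ⊗[k] M :=
  bigmapsD k H M Sinv act ∘ₗ rTensor (H ⊗[k] M) (map LinearMap.id comul ∘ₗ comul)

def OmegaD (Sinv : H →ₗ[k] H) (act : H ⊗[k] M →ₗ[k] M) :
    (H ⊗[k] (H ⊗[k] (H ⊗[k] H))) ⊗[k] M →ₗ[k] H ⊗[k] M :=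
  map (mul' k H ∘ₗ map (mul' k H) Sinv
        ∘ₗ (TensorProduct.assoc k H H H).symm.toLinearMap
        ∘ₗ lTensor H (TensorProduct.comm k H H).toLinearMap) act
    ∘ₗ (TensorProduct.leftComm k H (H ⊗[k] (H ⊗[k] H)) M).toLinearMap
    ∘ₗ (TensorProduct.assoc k H (H ⊗[k] (H ⊗[k] H)) M).toLinearMap
    ∘ₗ rTensor M (TensorProduct.leftComm k H H (H ⊗[k] H)).toLinearMap

@[simp] lemma OmegaD_tmul (Sinv : H →ₗ[k] H) (act : H ⊗[k] M →ₗ[k] M)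
    (c₁ c₂ c₃ c₄ : H) (n : M) :
    OmegaD k H M Sinv act ((c₁ ⊗ₜ[k] (c₂ ⊗ₜ[k] (c₃ ⊗ₜ[k] c₄))) ⊗ₜ[k] n)
      = (c₁ * c₄ * Sinv c₃) ⊗ₜ[k] act (c₂ ⊗ₜ[k] n) := by
  simp [OmegaD]

set_option synthInstance.maxHeartbeats 400000 in
lemma Pmaps :
    (lTensor H (TensorProduct.assoc k H H H).toLinearMap ∘ₗ
     (TensorProduct.assoc k H (H ⊗[k] H) H).toLinearMap ∘ₗ
     rTensor H (lTensor H (comul (R := k))) ∘ₗ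
     (TensorProduct.assoc k H H H).symm.toLinearMap)
    = lTensor H ((TensorProduct.assoc k H H H).toLinearMap ∘ₗ rTensor H comul) := by
  apply LinearMap.ext; intro z
  induction z with
  | zero => simp only [map_zero]
  | add u v hu hv => simp only [map_add, hu, hv]
  | tmul x w =>
    induction w with
    | zero => simp only [tmul_zero, map_zero]
    | add u v hu hv => simp only [tmul_add, map_add, hu, hv]
    | tmul y z' =>
      simp only [comp_apply, LinearEquiv.coe_coe, assoc_symm_tmul, rTensor_tmul,
        lTensor_tmul, assoc_tmul]

lemma coassoc4 :
    ∀ a : H,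
    lTensor H (TensorProduct.assoc k H H H).toLinearMap
      ((TensorProduct.assoc k H (H ⊗[k] H) H)
        (rTensor H (map LinearMap.id (comul (R := k)) ∘ₗ comul) (comul a)))
    = lTensor H (map LinearMap.id (comul (R := k)) ∘ₗ comul) (comul a) := by
  intro a
  have hθ : (map LinearMap.id (comul (R := k) (A := H)) ∘ₗ comul : H →ₗ[k] _)
      = lTensor H comul ∘ₗ comul := rfl
  have e1 : rTensor H (map LinearMap.id (comul (R := k) (A := H)) ∘ₗ comul) (comul a)
      = rTensor H (lTensor H comul)
          ((TensorProduct.assoc k H H H).symm (lTensor H comul (comul a))) := by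
    rw [hθ, rTensor_comp, Coalgebra.coassoc_symm_apply]
    rfl
  rw [e1]
  have e2 := LinearMap.congr_fun (Pmaps k H) (lTensor H comul (comul a))
  simp only [comp_apply, LinearEquiv.coe_coe] at e2
  rw [e2]
  rw [← lTensor_comp_apply]
  have e3 : ((TensorProduct.assoc k H H H).toLinearMap ∘ₗ rTensor H comul) ∘ₗ
      (comul (R := k) (A := H)) = lTensor H comul ∘ₗ comul := by
    rw [LinearMap.comp_assoc]
    exact Coalgebra.coassoc
  rw [e3, ← hθ]

set_option synthInstance.maxHeartbeats 400000 in
lemma nat1 :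
    rTensor (H ⊗[k] M) (map LinearMap.id (comul (R := k)) ∘ₗ comul)
        ∘ₗ (TensorProduct.assoc k H H M).toLinearMap
    = (TensorProduct.assoc k (H ⊗[k] (H ⊗[k] H)) H M).toLinearMap
        ∘ₗ rTensor M (rTensor H (map LinearMap.id (comul (R := k)) ∘ₗ comul)) := by
  apply TensorProduct.ext_threefold; intro a b n
  simp only [comp_apply, LinearEquiv.coe_coe, assoc_tmul, rTensor_tmul]

set_option synthInstance.maxHeartbeats 400000 in
lemma nat2 (Sinv : H →ₗ[k] H) (act : H ⊗[k] M →ₗ[k] M) :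
    bigmapsD k H M Sinv act
        ∘ₗ (TensorProduct.assoc k (H ⊗[k] (H ⊗[k] H)) H M).toLinearMap
    = OmegaD k H M Sinv act
        ∘ₗ rTensor M (lTensor H (TensorProduct.assoc k H H H).toLinearMap
            ∘ₗ (TensorProduct.assoc k H (H ⊗[k] H) H).toLinearMap) := by
  apply TensorProduct.ext_threefold; intro w c₄ n
  induction w with
  | zero => simp only [zero_tmul, map_zero]
  | add u v hu hv => simp only [add_tmul, map_add, hu, hv]
  | tmul c₁ v =>
    induction v with
    | zero => simp only [tmul_zero, zero_tmul, map_zero]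
    | add u v hu hv => simp only [tmul_add, add_tmul, map_add, hu, hv]
    | tmul c₂ c₃ =>
      simp [bigmapsD]

set_option synthInstance.maxHeartbeats 400000 in
lemma G3 (Sinv : H →ₗ[k] H)
    (hS1 : Sinv ∘ₗ antipode (R := k) = LinearMap.id)
    (hS2 : antipode (R := k) (A := H) ∘ₗ Sinv = LinearMap.id)
    (act : H ⊗[k] M →ₗ[k] M) (a : H) (n : M) :
    OmegaD k H M Sinv act
        ((lTensor H (map LinearMap.id (comul (R := k)) ∘ₗ comul) (comul a)) ⊗ₜ[k] n)
    = lTensor H act ((TensorProduct.assoc k H H M) (comul a ⊗ₜ[k] n)) := by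
  set r := ℛ k a with hrdef
  set r2 : (i : H × H) → Coalgebra.Repr k (r.right i) (H × H) := fun i => ℛ k (r.right i) with hr2def
  set r22 : (i : H × H) → (j : H × H) → Coalgebra.Repr k ((r2 i).right j) (H × H) :=
    fun i j => ℛ k ((r2 i).right j) with hr22def
  rw [← r.eq]
  rw [map_sum, sum_tmul, map_sum]
  simp only [lTensor_tmul]
  calc
    ∑ j ∈ r.index, OmegaD k H M Sinv act
        ((r.left j ⊗ₜ[k] (map LinearMap.id (comul (R := k)) ∘ₗ comul) (r.right j)) ⊗ₜ[k] n)
      = ∑ j ∈ r.index, ∑ jj ∈ (r2 j).index, ∑ kk ∈ (r22 j jj).index,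
          (r.left j * (r22 j jj).right kk * Sinv ((r22 j jj).left kk)) ⊗ₜ[k]
            act ((r2 j).left jj ⊗ₜ[k] n) := by
        refine Finset.sum_congr rfl fun j _ => ?_
        have hθ : (map LinearMap.id (comul (R := k)) ∘ₗ comul) (r.right j)
            = ∑ jj ∈ (r2 j).index, ∑ kk ∈ (r22 j jj).index,
                (r2 j).left jj ⊗ₜ[k] ((r22 j jj).left kk ⊗ₜ[k] (r22 j jj).right kk) := by
          rw [comp_apply, ← (r2 j).eq, map_sum]
          refine Finset.sum_congr rfl fun jj _ => ?_
          rw [map_tmul, ← (r22 j jj).eq, tmul_sum]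
          simp
        rw [hθ]
        simp only [tmul_sum, sum_tmul, map_sum, OmegaD_tmul]
    _ = ∑ j ∈ r.index, ∑ jj ∈ (r2 j).index,
          (r.left j * algebraMap k H (counit ((r2 j).right jj))) ⊗ₜ[k]
            act ((r2 j).left jj ⊗ₜ[k] n) := by
        refine Finset.sum_congr rfl fun j _ => Finset.sum_congr rfl fun jj _ => ?_
        rw [← sum_tmul]
        congr 1
        calc ∑ kk ∈ (r22 j jj).index,
              r.left j * (r22 j jj).right kk * Sinv ((r22 j jj).left kk)
            = r.left j * ∑ kk ∈ (r22 j jj).index,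
                (r22 j jj).right kk * Sinv ((r22 j jj).left kk) := by
              rw [Finset.mul_sum]
              exact Finset.sum_congr rfl fun kk _ => by rw [mul_assoc]
          _ = r.left j * algebraMap k H (counit ((r2 j).right jj)) := by
              rw [sum_mul_sinv_eq k H Sinv hS1 hS2 (r22 j jj)]
    _ = ∑ j ∈ r.index, r.left j ⊗ₜ[k] act (r.right j ⊗ₜ[k] n) := by
        refine Finset.sum_congr rfl fun j _ => ?_
        have hcu : ∑ jj ∈ (r2 j).index, (counit (R := k) ((r2 j).right jj)) • (r2 j).left jj
            = r.right j := by
          have key := Coalgebra.sum_tmul_counit_eq (r2 j)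
          have key2 := congrArg (TensorProduct.rid k H) key
          simp only [map_sum, rid_tmul, one_smul] at key2
          exact key2
        calc ∑ jj ∈ (r2 j).index,
              (r.left j * algebraMap k H (counit ((r2 j).right jj))) ⊗ₜ[k]
                act ((r2 j).left jj ⊗ₜ[k] n)
            = ∑ jj ∈ (r2 j).index, r.left j ⊗ₜ[k]
                act (((counit (R := k) ((r2 j).right jj)) • (r2 j).left jj) ⊗ₜ[k] n) := by
              refine Finset.sum_congr rfl fun jj _ => ?_
              rw [← Algebra.commutes, ← Algebra.smul_def, smul_tmul, ← smul_tmul', map_smul]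
          _ = r.left j ⊗ₜ[k] act (r.right j ⊗ₜ[k] n) := by
              rw [← tmul_sum, ← map_sum, ← sum_tmul, hcu]
    _ = lTensor H act ((TensorProduct.assoc k H H M)
          ((∑ i ∈ r.index, r.left i ⊗ₜ[k] r.right i) ⊗ₜ[k] n)) := by
        rw [sum_tmul, map_sum, map_sum]
        simp only [assoc_tmul, lTensor_tmul]

lemma aydRHS_eq (Sinv : H →ₗ[k] H) (act : H ⊗[k] M →ₗ[k] M) (coact : M →ₗ[k] H ⊗[k] M) :
    aydRHSll k H M Sinv act coact = PhiD k H M Sinv act ∘ₗ lTensor H coact := by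
  unfold aydRHSll PhiD bigmapsD
  rw [← rTensor_comp_lTensor (f := map LinearMap.id (comul (R := k) (A := H)) ∘ₗ comul)
    (g := coact)]
  simp only [LinearMap.comp_assoc]

set_option synthInstance.maxHeartbeats 400000 in
lemma claimC (Sinv : H →ₗ[k] H)
    (hS1 : Sinv ∘ₗ antipode (R := k) = LinearMap.id)
    (hS2 : antipode (R := k) (A := H) ∘ₗ Sinv = LinearMap.id)
    (act : H ⊗[k] M →ₗ[k] M) :
    PhiD k H M Sinv act ∘ₗ (TensorProduct.assoc k H H M).toLinearMap ∘ₗ rTensor M comul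
    = lTensor H act ∘ₗ (TensorProduct.assoc k H H M).toLinearMap ∘ₗ rTensor M comul := by
  apply TensorProduct.ext'; intro a n
  simp only [comp_apply, LinearEquiv.coe_coe, rTensor_tmul]
  have e1 := LinearMap.congr_fun (nat1 k H M) (comul a ⊗ₜ[k] n)
  simp only [comp_apply, LinearEquiv.coe_coe, rTensor_tmul] at e1
  have e2 := LinearMap.congr_fun (nat2 k H M Sinv act)
    ((rTensor H (map LinearMap.id comul ∘ₗ comul) (comul a)) ⊗ₜ[k] n)
  simp only [comp_apply, LinearEquiv.coe_coe, rTensor_tmul] at e2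
  unfold PhiD
  rw [comp_apply, e1, e2, coassoc4 k H a]
  exact G3 k H M Sinv hS1 hS2 act a n


end AYDAux

theorem statement1
    (Sinv : H →ₗ[k] H)
    (hS1 : Sinv ∘ₗ HopfAlgebra.antipode (R := k) = LinearMap.id)
    (hS2 : HopfAlgebra.antipode (R := k) ∘ₗ Sinv = LinearMap.id)
    (act : H ⊗[k] M →ₗ[k] M)
    (hact_one : ∀ m : M, act ((1 : H) ⊗ₜ[k] m) = m)
    (hact_mul : ∀ (g h : H) (m : M),
      act ((g * h) ⊗ₜ[k] m) = act (g ⊗ₜ[k] act (h ⊗ₜ[k] m)))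
    (coact : M →ₗ[k] H ⊗[k] M)
    (hcoassoc : map LinearMap.id coact ∘ₗ coact =
      (TensorProduct.assoc k H H M).toLinearMap ∘ₗ map comul LinearMap.id ∘ₗ coact)
    (hcounit : (TensorProduct.lid k M).toLinearMap
        ∘ₗ map (counit (R := k) (A := H)) LinearMap.id ∘ₗ coact = LinearMap.id)
    (hayd : IsAYDll k H M Sinv act coact) :
    -- `m ↦ m⁽⁻¹⁾·m⁽⁰⁾` is a homomorphism of left `H`-comodules
    coact ∘ₗ (act ∘ₗ coact) = map LinearMap.id (act ∘ₗ coact) ∘ₗ coact := by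
  apply LinearMap.ext; intro m
  have hayd' : coact ∘ₗ act = aydRHSll k H M Sinv act coact := hayd
  have step1 : (coact ∘ₗ (act ∘ₗ coact)) m = aydRHSll k H M Sinv act coact (coact m) := by
    rw [← hayd']; rfl
  rw [step1, AYDAux.aydRHS_eq, comp_apply]
  have hco := LinearMap.congr_fun hcoassoc m
  simp only [comp_apply, LinearEquiv.coe_coe] at hco
  have hlt : lTensor H coact (coact m) = map LinearMap.id coact (coact m) := rfl
  rw [hlt, hco]
  have e := LinearMap.congr_fun (AYDAux.claimC k H M Sinv hS1 hS2 act) (coact m)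
  simp only [comp_apply, LinearEquiv.coe_coe] at e
  have hrt : rTensor M (comul (R := k) (A := H)) (coact m)
      = map comul LinearMap.id (coact m) := rfl
  rw [hrt] at e
  rw [e, ← hco]
  have hsplit : map (LinearMap.id : H →ₗ[k] H) (act ∘ₗ coact)
      = lTensor H act ∘ₗ lTensor H coact := by
    rw [← lTensor_comp]; rfl
  rw [comp_apply, hsplit, comp_apply]
  rfl
end
end

section
/- Let H be a Hopf algebra with bijective antipode, N a left-left Yetter-Drinfeld module and M a left-left anti-Yetter-Drinfeld module. Then N⊗M with diagonal action h(n⊗m) = h⁽¹⁾n ⊗ h⁽²⁾m and codiagonal coaction Δ(n⊗m) = n⁽⁻¹⁾m⁽⁻¹⁾ ⊗ n⁽⁰⁾ ⊗ m⁽⁰⁾ is a left-left anti-Yetter-Drinfeld module. -/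
open TensorProduct LinearMap Coalgebra

noncomputable section

variable (k : Type) [Field k] (H : Type) [Ring H] [HopfAlgebra k H]
variable (M : Type) [AddCommGroup M] [Module k M]
variable (N : Type) [AddCommGroup N] [Module k N]

/-- Diagonal action `h(n⊗m) = h⁽¹⁾n ⊗ h⁽²⁾m` on `N ⊗ M`. -/
def diagAct (actN : H ⊗[k] N →ₗ[k] N) (actM : H ⊗[k] M →ₗ[k] M) :
    H ⊗[k] (N ⊗[k] M) →ₗ[k] N ⊗[k] M :=
  map actN actM ∘ₗ (tensorTensorTensorComm k H H N M).toLinearMap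
    ∘ₗ map comul LinearMap.id

/-- Codiagonal coaction `Δ(n⊗m) = n⁽⁻¹⁾m⁽⁻¹⁾ ⊗ n⁽⁰⁾ ⊗ m⁽⁰⁾` on `N ⊗ M`. -/
def codiagCoact (coactN : N →ₗ[k] H ⊗[k] N) (coactM : M →ₗ[k] H ⊗[k] M) :
    N ⊗[k] M →ₗ[k] H ⊗[k] (N ⊗[k] M) :=
  map (mul' k H) LinearMap.id ∘ₗ (tensorTensorTensorComm k H N H M).toLinearMap
    ∘ₗ map coactN coactM

def DD2 : H →ₗ[k] H ⊗[k] (H ⊗[k] H) := map LinearMap.id comul ∘ₗ comul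
def DD3 : H →ₗ[k] H ⊗[k] (H ⊗[k] (H ⊗[k] H)) := lTensor H (DD2 k H) ∘ₗ comul
def DD4 : H →ₗ[k] H ⊗[k] (H ⊗[k] (H ⊗[k] (H ⊗[k] H))) := lTensor H (DD3 k H) ∘ₗ comul
def DD5 : H →ₗ[k] H ⊗[k] (H ⊗[k] (H ⊗[k] (H ⊗[k] (H ⊗[k] H))))
  := lTensor H (DD4 k H) ∘ₗ comul

lemma DD2_eq : DD2 k H = lTensor H comul ∘ₗ comul := rfl

-- functoriality facts
lemma F2 : DD4 k H = lTensor H (lTensor H (DD2 k H)) ∘ₗ DD2 k H := by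
  simp only [DD4, DD3, DD2_eq, lTensor_comp, LinearMap.comp_assoc]

lemma F4 : DD5 k H = lTensor H (lTensor H (DD3 k H)) ∘ₗ DD2 k H := by
  simp only [DD5, DD4, DD3, DD2_eq, lTensor_comp, LinearMap.comp_assoc]

lemma F5 : lTensor H (lTensor H comul) ∘ₗ DD2 k H = DD3 k H := by
  simp only [DD3, DD2_eq, lTensor_comp, LinearMap.comp_assoc]

lemma DD3_eq : DD3 k H = lTensor H (DD2 k H) ∘ₗ comul := rfl
lemma DD4_eq : DD4 k H = lTensor H (DD3 k H) ∘ₗ comul := rfl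
lemma DD5_eq : DD5 k H = lTensor H (DD4 k H) ∘ₗ comul := rfl

section Aux
variable {A B C D A' B' C' D' : Type}
  [AddCommGroup A] [Module k A] [AddCommGroup B] [Module k B]
  [AddCommGroup C] [Module k C] [AddCommGroup D] [Module k D]
  [AddCommGroup A'] [Module k A'] [AddCommGroup B'] [Module k B']
  [AddCommGroup C'] [Module k C'] [AddCommGroup D'] [Module k D']

lemma nat_tttc (f : A →ₗ[k] A') (g : B →ₗ[k] B') (p : C →ₗ[k] C') (q : D →ₗ[k] D') :
    map (map f p) (map g q) ∘ₗ (tensorTensorTensorComm k A B C D).toLinearMap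
      = (tensorTensorTensorComm k A' B' C' D').toLinearMap ∘ₗ map (map f g) (map p q) := by
  ext; simp

lemma nat_assoc_symm_lT (f : C →ₗ[k] C') :
    lTensor (A ⊗[k] B) f ∘ₗ (TensorProduct.assoc k A B C).symm.toLinearMap
      = (TensorProduct.assoc k A B C').symm.toLinearMap ∘ₗ lTensor A (lTensor B f) := by
  ext; simp

lemma nat_N2 (f : B →ₗ[k] B') (g : D →ₗ[k] D') :
    map (lTensor A f) (lTensor C g) ∘ₗ (TensorProduct.assoc k A B (C ⊗[k] D)).symm.toLinearMap
      = (TensorProduct.assoc k A B' (C ⊗[k] D')).symm.toLinearMap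
          ∘ₗ lTensor A (rTensor (C ⊗[k] D') f) ∘ₗ lTensor A (lTensor B (lTensor C g)) := by
  ext; simp

lemma mk_one_lT (f : A →ₗ[k] B) :
    lTensor H f ∘ₗ (mk k H A) 1 = (mk k H B) 1 ∘ₗ f := by
  ext; simp

lemma iota_mk_one :
    rTensor A (Algebra.linearMap k H) ∘ₗ (mk k k A) 1 = (mk k H A) 1 := by
  ext; simp

lemma lT_lT_cancel (e : C ≃ₗ[k] C') :
    lTensor A (lTensor B e.toLinearMap) ∘ₗ lTensor A (lTensor B e.symm.toLinearMap)
      = LinearMap.id := by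
  ext; simp

end Aux

lemma CB0 : map comul comul ∘ₗ comul
    = (TensorProduct.assoc k H H (H ⊗[k] H)).symm.toLinearMap ∘ₗ DD3 k H := by
  rw [← lTensor_comp_rTensor]
  simp only [LinearMap.comp_assoc]
  rw [← coassoc_symm]
  simp only [← LinearMap.comp_assoc]
  rw [nat_assoc_symm_lT]
  simp only [LinearMap.comp_assoc]
  rw [← DD2_eq, F5]

lemma F6 : lTensor H (lTensor H (lTensor H comul)) ∘ₗ DD3 k H = DD4 k H := by
  simp only [DD4, DD3, DD2_eq, lTensor_comp, LinearMap.comp_assoc]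

lemma CS3 : map (DD2 k H) (DD2 k H) ∘ₗ comul
    = (TensorProduct.assoc k H (H ⊗[k] H) (H ⊗[k] (H ⊗[k] H))).symm.toLinearMap
        ∘ₗ lTensor H (rTensor (H ⊗[k] (H ⊗[k] H)) comul) ∘ₗ DD4 k H := by
  have h1 : map (DD2 k H) (DD2 k H)
      = map (lTensor H comul) (lTensor H comul) ∘ₗ map comul comul := by
    rw [DD2_eq, map_comp]
  rw [h1, LinearMap.comp_assoc, CB0, ← LinearMap.comp_assoc, nat_N2]
  simp only [LinearMap.comp_assoc]
  rw [F6]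

lemma CS4a : rTensor (H ⊗[k] (H ⊗[k] H)) comul ∘ₗ DD3 k H
    = (TensorProduct.assoc k H H (H ⊗[k] (H ⊗[k] H))).symm.toLinearMap ∘ₗ DD4 k H := by
  rw [DD3_eq, ← LinearMap.comp_assoc, rTensor_comp_lTensor, ← lTensor_comp_rTensor,
    LinearMap.comp_assoc, ← coassoc_symm, ← LinearMap.comp_assoc, nat_assoc_symm_lT]
  simp only [LinearMap.comp_assoc]
  rw [← DD2_eq, ← F2]

lemma CS4 : lTensor H (rTensor (H ⊗[k] (H ⊗[k] H)) comul) ∘ₗ DD4 k H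
    = lTensor H ((TensorProduct.assoc k H H (H ⊗[k] (H ⊗[k] H))).symm.toLinearMap)
        ∘ₗ DD5 k H := by
  rw [DD4_eq, ← LinearMap.comp_assoc, ← lTensor_comp, CS4a, lTensor_comp,
    LinearMap.comp_assoc, ← DD5_eq]

lemma CS5a : rTensor (H ⊗[k] H) comul ∘ₗ DD2 k H
    = (TensorProduct.assoc k H H (H ⊗[k] H)).symm.toLinearMap ∘ₗ DD3 k H := by
  rw [DD2_eq, ← LinearMap.comp_assoc, rTensor_comp_lTensor]
  rw [show (map comul comul) ∘ₗ (comul (R := k) (A := H)) = _ from CB0 k H]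

lemma CS5 : lTensor H (lTensor H (rTensor (H ⊗[k] H) comul)) ∘ₗ DD4 k H
    = lTensor H (lTensor H ((TensorProduct.assoc k H H (H ⊗[k] H)).symm.toLinearMap))
        ∘ₗ DD5 k H := by
  rw [F2, ← LinearMap.comp_assoc, ← lTensor_comp, ← lTensor_comp, CS5a,
    lTensor_comp, lTensor_comp, LinearMap.comp_assoc, F4]

lemma I2 : lTensor H (rTensor H comul) ∘ₗ DD2 k H
    = lTensor H ((TensorProduct.assoc k H H H).symm.toLinearMap) ∘ₗ DD3 k H := by
  rw [DD2_eq, ← LinearMap.comp_assoc, ← lTensor_comp, ← coassoc_symm]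
  rw [← DD2_eq, lTensor_comp, LinearMap.comp_assoc, ← DD3_eq]

lemma I3a : rTensor (H ⊗[k] H) (Algebra.linearMap k H ∘ₗ counit) ∘ₗ DD2 k H
    = (mk k H (H ⊗[k] H)) 1 ∘ₗ comul := by
  rw [rTensor_comp, DD2_eq]
  simp only [LinearMap.comp_assoc]
  rw [← LinearMap.comp_assoc comul (lTensor H comul) (rTensor (H ⊗[k] H) counit),
    rTensor_comp_lTensor, ← lTensor_comp_rTensor]
  simp only [LinearMap.comp_assoc]
  rw [rTensor_counit_comp_comul,
    ← LinearMap.comp_assoc ((mk k k H) 1) (lTensor k comul)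
      (rTensor (H ⊗[k] H) (Algebra.linearMap k H)),
    rTensor_comp_lTensor, ← lTensor_comp_rTensor, LinearMap.comp_assoc, iota_mk_one, mk_one_lT]

lemma I3 : lTensor H (lTensor H (rTensor (H ⊗[k] H) (Algebra.linearMap k H ∘ₗ counit)))
      ∘ₗ DD4 k H
    = lTensor H (lTensor H ((mk k H (H ⊗[k] H)) 1)) ∘ₗ DD3 k H := by
  rw [F2, ← LinearMap.comp_assoc, ← lTensor_comp, ← lTensor_comp, I3a,
    lTensor_comp, lTensor_comp, LinearMap.comp_assoc, F5]

lemma CA : lTensor H (lTensor H (rTensor (H ⊗[k] H)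
        (mul' k H ∘ₗ rTensor H (HopfAlgebra.antipode (R := k)))))
      ∘ₗ lTensor H (lTensor H (rTensor (H ⊗[k] H) comul))
    = lTensor H (lTensor H (rTensor (H ⊗[k] H) (Algebra.linearMap k H ∘ₗ counit))) := by
  simp only [← lTensor_comp, ← rTensor_comp, LinearMap.comp_assoc]
  rw [HopfAlgebra.mul_antipode_rTensor_comul]
/-- the "evaluator" appearing in `aydRHSll` -/
def EvA (P : Type) [AddCommGroup P] [Module k P] (Sv : H →ₗ[k] H) (act : H ⊗[k] P →ₗ[k] P) :
    ((H ⊗[k] (H ⊗[k] H)) ⊗[k] (H ⊗[k] P)) →ₗ[k] H ⊗[k] P :=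
  map (mul' k H ∘ₗ map (mul' k H) Sv) act
    ∘ₗ (TensorProduct.assoc k (H ⊗[k] H) H (H ⊗[k] P)).symm.toLinearMap
    ∘ₗ map LinearMap.id
        ((TensorProduct.leftComm k H H P).toLinearMap
          ∘ₗ (TensorProduct.assoc k H H P).toLinearMap)
    ∘ₗ (tensorTensorTensorComm k H (H ⊗[k] H) H P).toLinearMap

lemma EvA_tmul (P : Type) [AddCommGroup P] [Module k P] (Sv : H →ₗ[k] H)
    (act : H ⊗[k] P →ₗ[k] P) (x₁ x₂ x₃ b : H) (p : P) :
    EvA k H P Sv act ((x₁ ⊗ₜ[k] (x₂ ⊗ₜ[k] x₃)) ⊗ₜ[k] (b ⊗ₜ[k] p))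
      = (x₁ * b * Sv x₃) ⊗ₜ[k] act (x₂ ⊗ₜ[k] p) := by
  simp [EvA, mul'_apply]

def psiG : (H ⊗[k] N) ⊗[k] (H ⊗[k] M) →ₗ[k] H ⊗[k] (N ⊗[k] M) :=
  map (mul' k H) LinearMap.id ∘ₗ (tensorTensorTensorComm k H N H M).toLinearMap

def GLm (Sv₁ Sv₂ : H →ₗ[k] H) (actN : H ⊗[k] N →ₗ[k] N) (actM : H ⊗[k] M →ₗ[k] M) :
    ((H ⊗[k] (H ⊗[k] H)) ⊗[k] (H ⊗[k] (H ⊗[k] H)))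
        ⊗[k] ((H ⊗[k] N) ⊗[k] (H ⊗[k] M)) →ₗ[k] H ⊗[k] (N ⊗[k] M) :=
  psiG k H M N ∘ₗ map (EvA k H N Sv₁ actN) (EvA k H M Sv₂ actM)
    ∘ₗ (tensorTensorTensorComm k (H ⊗[k] (H ⊗[k] H)) (H ⊗[k] (H ⊗[k] H))
        (H ⊗[k] N) (H ⊗[k] M)).toLinearMap

def G5m (Sv₂ : H →ₗ[k] H) (actN : H ⊗[k] N →ₗ[k] N) (actM : H ⊗[k] M →ₗ[k] M) :
    (H ⊗[k] (H ⊗[k] (H ⊗[k] (H ⊗[k] H))))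
        ⊗[k] ((H ⊗[k] N) ⊗[k] (H ⊗[k] M)) →ₗ[k] H ⊗[k] (N ⊗[k] M) :=
  psiG k H M N
    ∘ₗ map (map (mul' k H) actN ∘ₗ (tensorTensorTensorComm k H H H N).toLinearMap)
        (EvA k H M Sv₂ actM)
    ∘ₗ (tensorTensorTensorComm k (H ⊗[k] H) (H ⊗[k] (H ⊗[k] H))
        (H ⊗[k] N) (H ⊗[k] M)).toLinearMap
    ∘ₗ rTensor ((H ⊗[k] N) ⊗[k] (H ⊗[k] M))
        ((TensorProduct.assoc k H H (H ⊗[k] (H ⊗[k] H))).symm.toLinearMap)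

def GRm (Sv₂ : H →ₗ[k] H) (actN : H ⊗[k] N →ₗ[k] N) (actM : H ⊗[k] M →ₗ[k] M) :
    (H ⊗[k] ((H ⊗[k] H) ⊗[k] H)) ⊗[k] ((H ⊗[k] N) ⊗[k] (H ⊗[k] M))
      →ₗ[k] H ⊗[k] (N ⊗[k] M) :=
  map (mul' k H ∘ₗ rTensor H (mul' k H)) LinearMap.id
    ∘ₗ (TensorProduct.assoc k (H ⊗[k] H) H (N ⊗[k] M)).symm.toLinearMap
    ∘ₗ lTensor (H ⊗[k] H)
        (map Sv₂ (map actN actM ∘ₗ (tensorTensorTensorComm k H H N M).toLinearMap)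
          ∘ₗ (TensorProduct.leftComm k (H ⊗[k] H) H (N ⊗[k] M)).toLinearMap
          ∘ₗ (TensorProduct.assoc k (H ⊗[k] H) H (N ⊗[k] M)).toLinearMap)
    ∘ₗ (tensorTensorTensorComm k H ((H ⊗[k] H) ⊗[k] H) H (N ⊗[k] M)).toLinearMap
    ∘ₗ map LinearMap.id (psiG k H M N)

lemma GRm_tmul (Sv₂ : H →ₗ[k] H) (actN : H ⊗[k] N →ₗ[k] N) (actM : H ⊗[k] M →ₗ[k] M)
    (x₁ p q x₃ a b : H) (n : N) (m : M) :
    GRm k H M N Sv₂ actN actM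
        ((x₁ ⊗ₜ[k] ((p ⊗ₜ[k] q) ⊗ₜ[k] x₃)) ⊗ₜ[k] ((a ⊗ₜ[k] n) ⊗ₜ[k] (b ⊗ₜ[k] m)))
      = (x₁ * (a * b) * Sv₂ x₃) ⊗ₜ[k] (actN (p ⊗ₜ[k] n) ⊗ₜ[k] actM (q ⊗ₜ[k] m)) := by
  simp [GRm, psiG, mul'_apply, mul_assoc]

lemma aydRHS_eq (P : Type) [AddCommGroup P] [Module k P] (Sv : H →ₗ[k] H)
    (act : H ⊗[k] P →ₗ[k] P) (coact : P →ₗ[k] H ⊗[k] P) :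
    aydRHSll k H P Sv act coact = EvA k H P Sv act ∘ₗ map (DD2 k H) coact := by
  simp only [aydRHSll, EvA, DD2, LinearMap.comp_assoc]

lemma E1' (Sv₁ Sv₂ : H →ₗ[k] H) (actN : H ⊗[k] N →ₗ[k] N) (actM : H ⊗[k] M →ₗ[k] M) :
    GLm k H M N Sv₁ Sv₂ actN actM
        ∘ₗ rTensor ((H ⊗[k] N) ⊗[k] (H ⊗[k] M))
          ((TensorProduct.assoc k H (H ⊗[k] H) (H ⊗[k] (H ⊗[k] H))).symm.toLinearMap
            ∘ₗ lTensor H ((TensorProduct.assoc k H H (H ⊗[k] (H ⊗[k] H))).symm.toLinearMap)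
            ∘ₗ lTensor H (lTensor H ((TensorProduct.assoc k H H (H ⊗[k] H)).toLinearMap)))
      = G5m k H M N Sv₂ actN actM
          ∘ₗ rTensor ((H ⊗[k] N) ⊗[k] (H ⊗[k] M))
            (lTensor H (lTensor H (rTensor (H ⊗[k] H) (mul' k H)
              ∘ₗ rTensor (H ⊗[k] H) (rTensor H Sv₁)))) := by
  ext
  simp [GLm, G5m, EvA_tmul, psiG, mul'_apply, mul_assoc]

lemma E2' (Sv₂ : H →ₗ[k] H) (actN : H ⊗[k] N →ₗ[k] N) (actM : H ⊗[k] M →ₗ[k] M) :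
    G5m k H M N Sv₂ actN actM
        ∘ₗ rTensor ((H ⊗[k] N) ⊗[k] (H ⊗[k] M))
          (lTensor H (lTensor H ((mk k H (H ⊗[k] H)) 1)))
      = GRm k H M N Sv₂ actN actM
          ∘ₗ rTensor ((H ⊗[k] N) ⊗[k] (H ⊗[k] M))
            (lTensor H ((TensorProduct.assoc k H H H).symm.toLinearMap)) := by
  ext
  simp [G5m, GRm_tmul, EvA_tmul, psiG, mul'_apply, mul_assoc]

lemma Bprime (Sv₂ : H →ₗ[k] H) (actN : H ⊗[k] N →ₗ[k] N) (actM : H ⊗[k] M →ₗ[k] M) :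
    EvA k H (N ⊗[k] M) Sv₂ (diagAct k H M N actN actM)
        ∘ₗ lTensor (H ⊗[k] (H ⊗[k] H)) (psiG k H M N)
      = GRm k H M N Sv₂ actN actM
          ∘ₗ rTensor ((H ⊗[k] N) ⊗[k] (H ⊗[k] M)) (lTensor H (rTensor H comul)) := by
  ext x₁ x₂ x₃ a n b m
  simp only [AlgebraTensorModule.curry_apply, curry_apply, coe_restrictScalars, coe_comp, Function.comp_apply, lTensor_tmul, rTensor_tmul, psiG, EvA_tmul,
    map_tmul, LinearEquiv.coe_coe, tensorTensorTensorComm_tmul, mul'_apply, id_coe, id_eq,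
    diagAct]
  generalize hh : comul (R := k) (A := H) x₂ = t
  clear hh
  induction t using TensorProduct.induction_on with
  | zero => simp
  | tmul p q => simp [GRm_tmul, mul'_apply, mul_assoc]
  | add s t hs ht =>
      simp only [map_add, add_tmul, tmul_add, map_add] at hs ht ⊢
      rw [hs, ht]

lemma asm1 (aN : H ⊗[k] N →ₗ[k] N) (aM : H ⊗[k] M →ₗ[k] M)
    (cN : N →ₗ[k] H ⊗[k] N) (cM : M →ₗ[k] H ⊗[k] M) :
    codiagCoact k H M N cN cM ∘ₗ diagAct k H M N aN aM
      = psiG k H M N ∘ₗ map (cN ∘ₗ aN) (cM ∘ₗ aM)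
          ∘ₗ (tensorTensorTensorComm k H H N M).toLinearMap ∘ₗ map comul LinearMap.id := by
  ext h n m
  simp only [AlgebraTensorModule.curry_apply, curry_apply, coe_restrictScalars, coe_comp, Function.comp_apply, codiagCoact, diagAct, psiG, map_tmul,
    LinearEquiv.coe_coe, id_coe, id_eq]
  generalize hh : comul (R := k) (A := H) h = t
  clear hh
  induction t using TensorProduct.induction_on with
  | zero => simp
  | tmul g g' => simp
  | add s t hs ht =>
      simp only [map_add, add_tmul, map_add] at hs ht ⊢
      rw [hs, ht]

lemma asm2 (d : H →ₗ[k] H ⊗[k] (H ⊗[k] H))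
    (e₁ : (H ⊗[k] (H ⊗[k] H)) ⊗[k] (H ⊗[k] N) →ₗ[k] H ⊗[k] N)
    (e₂ : (H ⊗[k] (H ⊗[k] H)) ⊗[k] (H ⊗[k] M) →ₗ[k] H ⊗[k] M)
    (cN : N →ₗ[k] H ⊗[k] N) (cM : M →ₗ[k] H ⊗[k] M) :
    psiG k H M N ∘ₗ map (e₁ ∘ₗ map d cN) (e₂ ∘ₗ map d cM)
        ∘ₗ (tensorTensorTensorComm k H H N M).toLinearMap ∘ₗ map comul LinearMap.id
      = psiG k H M N ∘ₗ map e₁ e₂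
          ∘ₗ (tensorTensorTensorComm k (H ⊗[k] (H ⊗[k] H)) (H ⊗[k] (H ⊗[k] H))
              (H ⊗[k] N) (H ⊗[k] M)).toLinearMap
          ∘ₗ map (map d d ∘ₗ comul) (map cN cM) := by
  ext h n m
  simp only [AlgebraTensorModule.curry_apply, curry_apply, coe_restrictScalars, coe_comp, Function.comp_apply, psiG, map_tmul,
    LinearEquiv.coe_coe, id_coe, id_eq]
  generalize hh : comul (R := k) (A := H) h = t
  clear hh
  induction t using TensorProduct.induction_on with
  | zero => simp
  | tmul g g' => simp
  | add s t hs ht =>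
      simp only [map_add, add_tmul, map_add] at hs ht ⊢
      rw [hs, ht]

lemma asm4 {P Q R' : Type} [AddCommGroup P] [Module k P] [AddCommGroup Q] [Module k Q]
    [AddCommGroup R'] [Module k R']
    (d : H →ₗ[k] P) (g : Q →ₗ[k] R') (h : N ⊗[k] M →ₗ[k] Q) :
    map d (g ∘ₗ h) = lTensor P g ∘ₗ rTensor Q d ∘ₗ lTensor H h := by
  ext; simp
theorem statement4
    (Sinv : H →ₗ[k] H)
    (hSinv1 : Sinv ∘ₗ HopfAlgebra.antipode (R := k) = LinearMap.id)
    (hSinv2 : HopfAlgebra.antipode (R := k) ∘ₗ Sinv = LinearMap.id)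
    (actN : H ⊗[k] N →ₗ[k] N)
    (hactN_one : ∀ n : N, actN ((1 : H) ⊗ₜ[k] n) = n)
    (hactN_mul : ∀ (g h : H) (n : N),
      actN ((g * h) ⊗ₜ[k] n) = actN (g ⊗ₜ[k] actN (h ⊗ₜ[k] n)))
    (coactN : N →ₗ[k] H ⊗[k] N)
    (hcoassocN : map LinearMap.id coactN ∘ₗ coactN =
      (TensorProduct.assoc k H H N).toLinearMap ∘ₗ map comul LinearMap.id ∘ₗ coactN)
    (hcounitN : (TensorProduct.lid k N).toLinearMap
        ∘ₗ map (counit (R := k) (A := H)) LinearMap.id ∘ₗ coactN = LinearMap.id)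
    -- `N` is a left-left Yetter-Drinfeld module
    (hydN : IsAYDll k H N (HopfAlgebra.antipode (R := k)) actN coactN)
    (actM : H ⊗[k] M →ₗ[k] M)
    (hactM_one : ∀ m : M, actM ((1 : H) ⊗ₜ[k] m) = m)
    (hactM_mul : ∀ (g h : H) (m : M),
      actM ((g * h) ⊗ₜ[k] m) = actM (g ⊗ₜ[k] actM (h ⊗ₜ[k] m)))
    (coactM : M →ₗ[k] H ⊗[k] M)
    (hcoassocM : map LinearMap.id coactM ∘ₗ coactM =
      (TensorProduct.assoc k H H M).toLinearMap ∘ₗ map comul LinearMap.id ∘ₗ coactM)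
    (hcounitM : (TensorProduct.lid k M).toLinearMap
        ∘ₗ map (counit (R := k) (A := H)) LinearMap.id ∘ₗ coactM = LinearMap.id)
    -- `M` is a left-left anti-Yetter-Drinfeld module
    (haydM : IsAYDll k H M Sinv actM coactM) :
    -- `N ⊗ M` is a left-left anti-Yetter-Drinfeld module
    IsAYDll k H (N ⊗[k] M) Sinv
      (diagAct k H M N actN actM) (codiagCoact k H M N coactN coactM) := by
  have hN : coactN ∘ₗ actN = aydRHSll k H N (HopfAlgebra.antipode (R := k)) actN coactN := hydN
  have hM : coactM ∘ₗ actM = aydRHSll k H M Sinv actM coactM := haydM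
  have hcd : codiagCoact k H M N coactN coactM
      = psiG k H M N ∘ₗ map coactN coactM := by
    rw [codiagCoact, psiG]; simp only [LinearMap.comp_assoc]
  -- the key identity, at the level of maps H ⊗ X → H ⊗ (N ⊗ M)
  have i1b : DD5 k H = lTensor H (lTensor H ((TensorProduct.assoc k H H (H ⊗[k] H)).toLinearMap))
      ∘ₗ lTensor H (lTensor H (rTensor (H ⊗[k] H) comul)) ∘ₗ DD4 k H := by
    have cc : lTensor H (lTensor H ((TensorProduct.assoc k H H (H ⊗[k] H)).toLinearMap))
        ∘ₗ lTensor H (lTensor H ((TensorProduct.assoc k H H (H ⊗[k] H)).symm.toLinearMap))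
        = LinearMap.id := by ext; simp
    rw [CS5, ← LinearMap.comp_assoc, cc, id_comp]
  have i1 : map (DD2 k H) (DD2 k H) ∘ₗ comul
      = (TensorProduct.assoc k H (H ⊗[k] H) (H ⊗[k] (H ⊗[k] H))).symm.toLinearMap
          ∘ₗ lTensor H ((TensorProduct.assoc k H H (H ⊗[k] (H ⊗[k] H))).symm.toLinearMap)
          ∘ₗ lTensor H (lTensor H ((TensorProduct.assoc k H H (H ⊗[k] H)).toLinearMap))
          ∘ₗ lTensor H (lTensor H (rTensor (H ⊗[k] H) comul)) ∘ₗ DD4 k H := by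
    rw [CS3, CS4, i1b]
  have ca2' : lTensor H (lTensor H (rTensor (H ⊗[k] H)
          (mul' k H ∘ₗ rTensor H (HopfAlgebra.antipode (R := k)))))
        ∘ₗ (lTensor H (lTensor H (rTensor (H ⊗[k] H) comul)) ∘ₗ DD4 k H)
      = lTensor H (lTensor H ((mk k H (H ⊗[k] H)) 1)) ∘ₗ DD3 k H := by
    rw [← LinearMap.comp_assoc, CA, I3]
  have ca2 : rTensor ((H ⊗[k] N) ⊗[k] (H ⊗[k] M))
        (lTensor H (lTensor H (rTensor (H ⊗[k] H) (mul' k H)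
          ∘ₗ rTensor (H ⊗[k] H) (rTensor H (HopfAlgebra.antipode (R := k))))))
      ∘ₗ (rTensor ((H ⊗[k] N) ⊗[k] (H ⊗[k] M))
            (lTensor H (lTensor H (rTensor (H ⊗[k] H) comul)))
          ∘ₗ rTensor ((H ⊗[k] N) ⊗[k] (H ⊗[k] M)) (DD4 k H))
      = rTensor ((H ⊗[k] N) ⊗[k] (H ⊗[k] M)) (lTensor H (lTensor H ((mk k H (H ⊗[k] H)) 1)))
        ∘ₗ rTensor ((H ⊗[k] N) ⊗[k] (H ⊗[k] M)) (DD3 k H) := by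
    simp only [← rTensor_comp]
    rw [ca2', rTensor_comp]
  have key : GLm k H M N (HopfAlgebra.antipode (R := k)) Sinv actN actM
        ∘ₗ rTensor ((H ⊗[k] N) ⊗[k] (H ⊗[k] M)) (map (DD2 k H) (DD2 k H) ∘ₗ comul)
      = GRm k H M N Sinv actN actM
          ∘ₗ rTensor ((H ⊗[k] N) ⊗[k] (H ⊗[k] M))
            (lTensor H (rTensor H comul) ∘ₗ DD2 k H) := by
    rw [i1, I2]
    simp only [rTensor_comp]
    simp only [← LinearMap.comp_assoc]
    have e1 := E1' k H M N (HopfAlgebra.antipode (R := k)) Sinv actN actM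
    simp only [rTensor_comp, ← LinearMap.comp_assoc] at e1
    rw [e1]
    simp only [LinearMap.comp_assoc]
    rw [ca2]
    have e2 := E2' k H M N Sinv actN actM
    simp only [← LinearMap.comp_assoc] at e2 ⊢
    rw [e2]
  -- now assemble
  show codiagCoact k H M N coactN coactM ∘ₗ diagAct k H M N actN actM
      = aydRHSll k H (N ⊗[k] M) Sinv (diagAct k H M N actN actM)
          (codiagCoact k H M N coactN coactM)
  have e_lhs : codiagCoact k H M N coactN coactM ∘ₗ diagAct k H M N actN actM
      = GLm k H M N (HopfAlgebra.antipode (R := k)) Sinv actN actM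
          ∘ₗ map (map (DD2 k H) (DD2 k H) ∘ₗ comul) (map coactN coactM) := by
    rw [asm1, hN, hM, aydRHS_eq, aydRHS_eq, asm2, GLm]
    simp only [LinearMap.comp_assoc]
  have e_rhs : aydRHSll k H (N ⊗[k] M) Sinv (diagAct k H M N actN actM)
        (codiagCoact k H M N coactN coactM)
      = GRm k H M N Sinv actN actM
          ∘ₗ map (lTensor H (rTensor H comul) ∘ₗ DD2 k H) (map coactN coactM) := by
    rw [aydRHS_eq, hcd, (by ext; simp : map (DD2 k H) (psiG k H M N ∘ₗ map coactN coactM)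
      = lTensor (H ⊗[k] (H ⊗[k] H)) (psiG k H M N)
        ∘ₗ rTensor ((H ⊗[k] N) ⊗[k] (H ⊗[k] M)) (DD2 k H) ∘ₗ lTensor H (map coactN coactM))]
    simp only [← LinearMap.comp_assoc]
    rw [Bprime]
    rw [← rTensor_comp_lTensor (f := lTensor H (rTensor H comul) ∘ₗ DD2 k H)
      (g := map coactN coactM), rTensor_comp]
    simp only [← LinearMap.comp_assoc]
  rw [e_lhs, e_rhs,
    ← rTensor_comp_lTensor (f := map (DD2 k H) (DD2 k H) ∘ₗ comul) (g := map coactN coactM),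
    ← rTensor_comp_lTensor (f := lTensor H (rTensor H comul) ∘ₗ DD2 k H)
      (g := map coactN coactM)]
  simp only [← LinearMap.comp_assoc]
  rw [key]
end
end
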